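/- Let 0 < s < ∞, Q/(Q+s) < p ≤ ∞, 0 < q ≤ ∞, and let Ψ: X → X satisfy B(Ψ(x)) ∩ B(x) ≠ ∅ for all x and ||Ψ(x)| − |x|| ≤ σ for some fixed σ ≥ 0. Then the composition operator u ↦ u∘Ψ is bounded on I^s_{p,q}(X). -/

import Mathlib

open MeasureTheory Metric Filter ENNReal NNReal

noncomputable section

/-- ℓ^p-type sum with weights, with the obvious modification (sup) when `p = ∞`. -/
def sumPartG {ι : Type*} (p : ℝ≥0∞) (w : ι → ℝ≥0∞) (f : ι → ℝ≥0∞) : ℝ≥0∞ :=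
  if p = ∞ then ⨆ i, f i else (∑' i, w i * f i ^ p.toReal) ^ (1 / p.toReal)

/-- The ball associated to a vertex `x` of the hyperbolic filling. -/
def vBall {Z X : Type*} [MetricSpace Z] (ξ : X → Z) (lvl : X → ℤ) (x : X) : Set Z :=
  Metric.ball (ξ x) ((2:ℝ) ^ (-(lvl x)))

/-- The sequence-space quasinorm of `I^s_{p,q}(X)`, for `g : X → ℝ≥0∞`. -/
def seqNorm {Z X : Type*} [MetricSpace Z] [MeasurableSpace Z] (μ : Measure Z)
    (ξ : X → Z) (lvl : X → ℤ) (s : ℝ) (p q : ℝ≥0∞) (g : X → ℝ≥0∞) : ℝ≥0∞ :=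
  sumPartG q (fun _ : ℤ => 1)
    (fun k => (2 : ℝ≥0∞) ^ ((k : ℝ) * s) *
      sumPartG p (fun x : {x : X // lvl x = k} => μ (vBall ξ lvl x.1)) (fun x => g x.1))

/-- The edge relation of the hyperbolic filling graph. -/
def edgeRel {Z X : Type*} [MetricSpace Z] (ξ : X → Z) (lvl : X → ℤ) (x y : X) : Prop :=
  x ≠ y ∧ |lvl x - lvl y| ≤ 1 ∧ (vBall ξ lvl x ∩ vBall ξ lvl y).Nonempty

/-- The magnitude `|du|` of the discrete derivative of `u : X → ℂ`. -/
def eDu {Z X : Type*} [MetricSpace Z] (ξ : X → Z) (lvl : X → ℤ) (u : X → ℂ) (x : X) : ℝ≥0∞ :=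
  (∑' y : {y : X // edgeRel ξ lvl x y}, (‖u y.1 - u x‖₊ : ℝ≥0∞) ^ (2:ℝ)) ^ ((1:ℝ)/2)

/-- The Poisson extension of `f`. -/
def poisson {Z X : Type*} [MetricSpace Z] [MeasurableSpace Z] (μ : Measure Z)
    (ξ : X → Z) (lvl : X → ℤ) (f : Z → ℂ) (x : X) : ℂ :=
  ⨍ z in vBall ξ lvl x, f z ∂μ

/-- The discrete convolution `T_n u = ∑_{|x| = n} u(x) ψ_x`. -/
def discConv {Z X : Type*} (lvl : X → ℤ) (ψ : X → Z → ℝ) (u : X → ℂ) (n : ℤ) (z : Z) : ℂ :=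
  ∑' x : {x : X // lvl x = n}, (ψ x.1 z : ℂ) * u x.1

/-! ### Auxiliary lemmas -/

lemma aux_two_zpow_le {a b : ℤ} (h : a ≤ b) : (2:ℝ) ^ a ≤ (2:ℝ) ^ b :=
  zpow_le_zpow_right₀ one_le_two h

lemma aux_two_zpow_pos (a : ℤ) : (0:ℝ) < 2 ^ a := zpow_pos (by norm_num) a

lemma aux_two_zpow_add (a : ℤ) : (2:ℝ) ^ (a+1) = 2 ^ a + 2 ^ a := by
  rw [zpow_add₀ (by norm_num : (2:ℝ) ≠ 0)]; ring

lemma aux_sum_rpow_le {ι : Type*} (F : Finset ι) (e : ι → ℝ≥0∞) {t : ℝ} (ht : 0 < t) :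
    (∑ i ∈ F, e i) ^ t ≤ (F.card : ℝ≥0∞) ^ t * ∑ i ∈ F, e i ^ t := by
  have h1 : ∑ i ∈ F, e i ≤ (F.card : ℝ≥0∞) * (∑ i ∈ F, e i ^ t) ^ (1/t) := by
    calc ∑ i ∈ F, e i ≤ ∑ _i ∈ F, (∑ j ∈ F, e j ^ t) ^ (1/t) := by
          refine Finset.sum_le_sum fun i hi => ?_
          have h2 : e i ^ t ≤ ∑ j ∈ F, e j ^ t :=
            Finset.single_le_sum (f := fun j => e j ^ t) (fun _ _ => zero_le) hi
          calc e i = (e i ^ t) ^ (1/t) := by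
                rw [← ENNReal.rpow_mul, mul_one_div, div_self ht.ne', ENNReal.rpow_one]
            _ ≤ _ := ENNReal.rpow_le_rpow h2 (by positivity)
      _ = _ := by rw [Finset.sum_const, nsmul_eq_mul]
  calc (∑ i ∈ F, e i)^t ≤ ((F.card : ℝ≥0∞) * (∑ i ∈ F, e i ^ t) ^ (1/t))^t :=
        ENNReal.rpow_le_rpow h1 ht.le
    _ = _ := by
        rw [ENNReal.mul_rpow_of_nonneg _ _ ht.le, ← ENNReal.rpow_mul,
          one_div_mul_cancel ht.ne', ENNReal.rpow_one]

lemma aux_tsum_comp_le {α β ι : Type*} (Φ : α → β) (h : β → ℝ≥0∞) (N : ℕ) (F : Finset ι)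
    (L : ι → Set β)
    (hfin : ∀ b, (Φ ⁻¹' {b}).Finite)
    (hcard : ∀ b, (hfin b).toFinset.card ≤ N)
    (hrange : ∀ a, ∃ i ∈ F, Φ a ∈ L i) :
    ∑' a, h (Φ a) ≤ N * ∑ i ∈ F, ∑' b : L i, h b := by
  classical
  have key : ∑' a, h (Φ a) = ∑' b : β, ∑' a : Φ ⁻¹' {b}, h (Φ a.1) := by
    rw [← (Equiv.sigmaFiberEquiv Φ).tsum_eq (fun a => h (Φ a)),
      ENNReal.tsum_sigma' (fun c => h (Φ ((Equiv.sigmaFiberEquiv Φ) c)))]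
    rfl
  rw [key]
  have step : ∀ b : β, (∑' a : Φ ⁻¹' {b}, h (Φ a.1)) ≤
      N * ∑ i ∈ F, Set.indicator (L i) h b := by
    intro b
    haveI := (hfin b).fintype
    have hconst : (∑' a : Φ ⁻¹' {b}, h (Φ a.1)) = (Fintype.card (Φ ⁻¹' {b})) • h b := by
      rw [tsum_fintype]
      rw [Finset.sum_congr rfl (fun a _ => by rw [show Φ a.1 = b from a.2])]
      simp [Finset.card_univ]
    rw [hconst]
    rcases isEmpty_or_nonempty (Φ ⁻¹' {b}) with hE | hE
    · simp
    · obtain ⟨a⟩ := hE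
      obtain ⟨i, hiF, hbL⟩ := hrange a.1
      have hb : b ∈ L i := by rwa [show Φ a.1 = b from a.2] at hbL
      have hcard' : (Fintype.card (Φ ⁻¹' {b}) : ℝ≥0∞) ≤ N := by
        have := hcard b
        rw [Set.Finite.card_toFinset] at this
        exact_mod_cast this
      calc (Fintype.card (Φ ⁻¹' {b})) • h b = (Fintype.card (Φ ⁻¹' {b}) : ℝ≥0∞) * h b := by
            rw [nsmul_eq_mul]
        _ ≤ N * h b := mul_le_mul_left hcard' _
        _ ≤ N * ∑ i ∈ F, Set.indicator (L i) h b := by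
            refine mul_le_mul_right ?_ _
            calc h b = Set.indicator (L i) h b := by rw [Set.indicator_of_mem hb]
              _ ≤ _ := Finset.single_le_sum (f := fun i => Set.indicator (L i) h b)
                  (fun _ _ => zero_le) hiF
  calc ∑' b, (∑' a : Φ ⁻¹' {b}, h (Φ a.1)) ≤ ∑' b, (N : ℝ≥0∞) * ∑ i ∈ F, Set.indicator (L i) h b :=
        ENNReal.tsum_le_tsum step
    _ = N * ∑' b, ∑ i ∈ F, Set.indicator (L i) h b := ENNReal.tsum_mul_left
    _ = N * ∑ i ∈ F, ∑' b, Set.indicator (L i) h b := by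
        rw [Summable.tsum_finsetSum (fun i _ => ENNReal.summable)]
    _ = N * ∑ i ∈ F, ∑' b : L i, h b := by
        congr 1
        exact Finset.sum_congr rfl fun i _ => (tsum_subtype (L i) h).symm

lemma aux_count {Z X : Type*} [MetricSpace Z] [MeasurableSpace Z] [BorelSpace Z]
    (μ : Measure Z) (C Q : ℝ)
    (hdoub : ∀ (ζ : Z) (r lam : ℝ), 0 < r → 1 ≤ lam →
      μ (Metric.ball ζ (lam * r)) ≤ ENNReal.ofReal (C * lam ^ Q) * μ (Metric.ball ζ r))
    (hpos : ∀ (ζ : Z) (r : ℝ), 0 < r → 0 < μ (Metric.ball ζ r))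
    (hfin : ∀ (ζ : Z) (r : ℝ), μ (Metric.ball ζ r) < ∞)
    (ξ : X → Z) (lvl : X → ℤ)
    (hsep : ∀ x y : X, x ≠ y → lvl x = lvl y → (2:ℝ) ^ (-lvl x - 1) ≤ dist (ξ x) (ξ y))
    (σ : ℤ) (hσ : 0 ≤ σ) (k : ℤ) (ζ : Z) (T : Finset X)
    (hT1 : ∀ x ∈ T, lvl x = k) (hT2 : ∀ x ∈ T, dist (ξ x) ζ < (2:ℝ) ^ (σ+1-k)) :
    (T.card : ℝ≥0∞) ≤ ENNReal.ofReal (C * ((2:ℝ) ^ (σ+5)) ^ Q) := by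
  classical
  set r0 : ℝ := (2:ℝ) ^ (-k-2) with hr0def
  set Big : ℝ := (2:ℝ) ^ (σ+2-k) with hBigdef
  have hr0 : 0 < r0 := aux_two_zpow_pos _
  have hBig : 0 < Big := aux_two_zpow_pos _
  set D : ℝ≥0∞ := ENNReal.ofReal (C * ((2:ℝ) ^ (σ+5)) ^ Q) with hDdef
  have hsub1 : ∀ x ∈ T, ball (ξ x) r0 ⊆ ball ζ Big := by
    intro x hx
    apply ball_subset_ball'
    have h1 : r0 ≤ (2:ℝ) ^ (σ+1-k) := aux_two_zpow_le (by omega)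
    have h2 : (2:ℝ) ^ (σ+1-k) + (2:ℝ) ^ (σ+1-k) = Big := by
      rw [hBigdef, show σ+2-k = (σ+1-k)+1 by ring, aux_two_zpow_add]
    nlinarith [hT2 x hx]
  have hdisj : (T : Set X).PairwiseDisjoint fun x => ball (ξ x) r0 := by
    intro x hx y hy hxy
    have h1 : r0 + r0 ≤ dist (ξ x) (ξ y) := by
      have := hsep x y hxy (by rw [hT1 x hx, hT1 y hy])
      have h2 : (2:ℝ) ^ (-lvl x - 1) = r0 + r0 := by
        rw [hr0def, hT1 x hx, show -k-1 = (-k-2)+1 by ring, aux_two_zpow_add]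
      linarith
    exact ball_disjoint_ball h1
  have hlow : ∀ x ∈ T, μ (ball ζ Big) ≤ D * μ (ball (ξ x) r0) := by
    intro x hx
    have hsub2 : ball ζ Big ⊆ ball (ξ x) ((2:ℝ) ^ (σ+5) * r0) := by
      apply ball_subset_ball'
      have h1 : dist ζ (ξ x) < (2:ℝ) ^ (σ+1-k) := by rw [dist_comm]; exact hT2 x hx
      have h2 : (2:ℝ) ^ (σ+1-k) ≤ Big := aux_two_zpow_le (by omega)
      have h3 : Big + Big ≤ (2:ℝ) ^ (σ+5) * r0 := by
        rw [hr0def, ← zpow_add₀ (by norm_num : (2:ℝ) ≠ 0),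
          show σ+5+(-k-2) = (σ+2-k)+1 by ring, aux_two_zpow_add]
      linarith
    calc μ (ball ζ Big) ≤ μ (ball (ξ x) ((2:ℝ) ^ (σ+5) * r0)) := measure_mono hsub2
      _ ≤ D * μ (ball (ξ x) r0) := hdoub (ξ x) r0 _ hr0 (by
          calc (1:ℝ) = 2 ^ (0:ℤ) := by norm_num
            _ ≤ _ := aux_two_zpow_le (by omega))
  have hmain : (T.card : ℝ≥0∞) * μ (ball ζ Big) ≤ D * μ (ball ζ Big) := by
    calc (T.card : ℝ≥0∞) * μ (ball ζ Big) = ∑ _x ∈ T, μ (ball ζ Big) := by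
          rw [Finset.sum_const, nsmul_eq_mul]
      _ ≤ ∑ x ∈ T, D * μ (ball (ξ x) r0) := Finset.sum_le_sum hlow
      _ = D * ∑ x ∈ T, μ (ball (ξ x) r0) := by rw [Finset.mul_sum]
      _ = D * μ (⋃ x ∈ T, ball (ξ x) r0) := by
          rw [measure_biUnion_finset hdisj (fun x _ => measurableSet_ball)]
      _ ≤ D * μ (ball ζ Big) := by
          refine mul_le_mul_right (measure_mono ?_) _
          exact Set.iUnion₂_subset hsub1
  exact (ENNReal.mul_le_mul_iff_left (hpos ζ Big hBig).ne' (hfin ζ Big).ne).mp hmain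

lemma aux_meascomp {Z X : Type*} [MetricSpace Z] [MeasurableSpace Z]
    (μ : Measure Z) (C Q : ℝ)
    (hdoub : ∀ (ζ : Z) (r lam : ℝ), 0 < r → 1 ≤ lam →
      μ (Metric.ball ζ (lam * r)) ≤ ENNReal.ofReal (C * lam ^ Q) * μ (Metric.ball ζ r))
    (ξ : X → Z) (lvl : X → ℤ) (σ : ℤ) (hσ : 0 ≤ σ) (x y : X)
    (hxy : (vBall ξ lvl y ∩ vBall ξ lvl x).Nonempty)
    (hlv : |lvl y - lvl x| ≤ σ) :
    μ (vBall ξ lvl x) ≤ ENNReal.ofReal (C * ((2:ℝ) ^ (σ+2)) ^ Q) * μ (vBall ξ lvl y) := by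
  obtain ⟨z, hz1, hz2⟩ := hxy
  rw [vBall, mem_ball] at hz1 hz2
  have hdist : dist (ξ x) (ξ y) < (2:ℝ) ^ (-(lvl x)) + (2:ℝ) ^ (-(lvl y)) := by
    calc dist (ξ x) (ξ y) ≤ dist z (ξ x) + dist z (ξ y) := dist_triangle_left _ _ _
      _ < _ := by linarith
  have hsub : vBall ξ lvl x ⊆ ball (ξ y) ((2:ℝ) ^ (σ+2) * (2:ℝ) ^ (-(lvl y))) := by
    rw [vBall]
    apply ball_subset_ball'
    have h1 : (2:ℝ) ^ (-(lvl x)) ≤ (2:ℝ) ^ (σ - lvl y) := by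
      apply aux_two_zpow_le; have := abs_le.mp hlv; omega
    have h2 : (2:ℝ) ^ (σ - lvl y) + (2:ℝ) ^ (σ - lvl y) = (2:ℝ) ^ (σ + 1 - lvl y) := by
      rw [show σ + 1 - lvl y = (σ - lvl y) + 1 by ring, aux_two_zpow_add]
    have h3 : (2:ℝ) ^ (-(lvl y)) ≤ (2:ℝ) ^ (σ + 1 - lvl y) := aux_two_zpow_le (by omega)
    have h4 : (2:ℝ) ^ (σ+2) * (2:ℝ) ^ (-(lvl y)) =
        (2:ℝ) ^ (σ + 1 - lvl y) + (2:ℝ) ^ (σ + 1 - lvl y) := by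
      rw [← zpow_add₀ (by norm_num : (2:ℝ) ≠ 0),
        show σ + 2 + -(lvl y) = (σ + 1 - lvl y) + 1 by ring, aux_two_zpow_add]
    linarith
  calc μ (vBall ξ lvl x) ≤ μ (ball (ξ y) ((2:ℝ) ^ (σ+2) * (2:ℝ) ^ (-(lvl y)))) :=
        measure_mono hsub
    _ ≤ ENNReal.ofReal (C * ((2:ℝ) ^ (σ+2)) ^ Q) * μ (vBall ξ lvl y) := by
        rw [vBall]
        exact hdoub (ξ y) _ _ (aux_two_zpow_pos _) (by
          calc (1:ℝ) = 2 ^ (0:ℤ) := by norm_num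
            _ ≤ _ := aux_two_zpow_le (by omega))

lemma aux_claimB (q : ℝ≥0∞) (hq : 0 < q) (F : Finset ℤ) (M : ℝ≥0∞) (hM : M ≠ ∞) :
    ∃ Cb : ℝ≥0∞, Cb ≠ ∞ ∧ ∀ c d : ℤ → ℝ≥0∞,
      (∀ k, d k ≤ M * ∑ i ∈ F, c (k+i)) →
      sumPartG q (fun _ : ℤ => 1) d ≤ Cb * sumPartG q (fun _ : ℤ => 1) c := by
  by_cases hq' : q = ∞
  · refine ⟨M * F.card, ENNReal.mul_ne_top hM (ENNReal.natCast_ne_top _), fun c d hcd => ?_⟩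
    simp only [sumPartG, hq', if_pos rfl]
    refine iSup_le fun k => (hcd k).trans ?_
    calc M * ∑ i ∈ F, c (k+i) ≤ M * ∑ _i ∈ F, ⨆ j, c j :=
          mul_le_mul_right (Finset.sum_le_sum fun i _ => le_iSup c (k+i)) _
      _ = M * ((F.card : ℝ≥0∞) * ⨆ j, c j) := by rw [Finset.sum_const, nsmul_eq_mul]
      _ = M * F.card * ⨆ j, c j := by rw [mul_assoc]
  · have ht : 0 < q.toReal := ENNReal.toReal_pos hq.ne' hq'
    set t := q.toReal with htdef
    have hcardt : ((F.card : ℝ≥0∞)) ^ (1/t) ≠ ∞ :=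
      ENNReal.rpow_ne_top_of_nonneg (by positivity) (ENNReal.natCast_ne_top _)
    refine ⟨M * F.card * (F.card : ℝ≥0∞) ^ (1/t),
      ENNReal.mul_ne_top (ENNReal.mul_ne_top hM (ENNReal.natCast_ne_top _)) hcardt,
      fun c d hcd => ?_⟩
    simp only [sumPartG, if_neg hq', one_mul]
    have key : ∑' k, d k ^ t ≤ (M * F.card) ^ t * ((F.card : ℝ≥0∞) * ∑' k, c k ^ t) := by
      calc ∑' k, d k ^ t ≤ ∑' k, (M ^ t * (F.card : ℝ≥0∞) ^ t) * ∑ i ∈ F, c (k+i) ^ t := by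
            refine ENNReal.tsum_le_tsum fun k => ?_
            calc d k ^ t ≤ (M * ∑ i ∈ F, c (k+i)) ^ t := ENNReal.rpow_le_rpow (hcd k) ht.le
              _ = M ^ t * (∑ i ∈ F, c (k+i)) ^ t := ENNReal.mul_rpow_of_nonneg _ _ ht.le
              _ ≤ M ^ t * ((F.card : ℝ≥0∞) ^ t * ∑ i ∈ F, c (k+i) ^ t) :=
                  mul_le_mul_right (aux_sum_rpow_le F _ ht) _
              _ = _ := by rw [mul_assoc]
        _ = (M ^ t * (F.card : ℝ≥0∞) ^ t) * ∑' k, ∑ i ∈ F, c (k+i) ^ t := ENNReal.tsum_mul_left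
        _ = (M ^ t * (F.card : ℝ≥0∞) ^ t) * ∑ i ∈ F, ∑' k, c (k+i) ^ t := by
            rw [Summable.tsum_finsetSum (fun i _ => ENNReal.summable)]
        _ = (M ^ t * (F.card : ℝ≥0∞) ^ t) * ∑ _i ∈ F, ∑' k, c k ^ t := by
            congr 1
            refine Finset.sum_congr rfl fun i _ => ?_
            exact (Equiv.addRight i).tsum_eq (fun k => c k ^ t)
        _ = (M * F.card) ^ t * ((F.card : ℝ≥0∞) * ∑' k, c k ^ t) := by
            rw [Finset.sum_const, nsmul_eq_mul, ENNReal.mul_rpow_of_nonneg _ _ ht.le]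
    calc (∑' k, d k ^ t) ^ (1/t)
        ≤ ((M * F.card) ^ t * ((F.card : ℝ≥0∞) * ∑' k, c k ^ t)) ^ (1/t) :=
          ENNReal.rpow_le_rpow key (by positivity)
      _ = M * F.card * ((F.card : ℝ≥0∞) ^ (1/t) * (∑' k, c k ^ t) ^ (1/t)) := by
          rw [ENNReal.mul_rpow_of_nonneg _ _ (by positivity : (0:ℝ) ≤ 1/t),
            ENNReal.mul_rpow_of_nonneg _ _ (by positivity : (0:ℝ) ≤ 1/t),
            ← ENNReal.rpow_mul, mul_one_div, div_self ht.ne', ENNReal.rpow_one]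
      _ = M * F.card * (F.card : ℝ≥0∞) ^ (1/t) * (∑' k, c k ^ t) ^ (1/t) := by
          ring

lemma aux_claimA {Z X : Type*} [MetricSpace Z] [MeasurableSpace Z] [BorelSpace Z]
    (μ : Measure Z) (C Q : ℝ)
    (hdoub : ∀ (ζ : Z) (r lam : ℝ), 0 < r → 1 ≤ lam →
      μ (Metric.ball ζ (lam * r)) ≤ ENNReal.ofReal (C * lam ^ Q) * μ (Metric.ball ζ r))
    (hpos : ∀ (ζ : Z) (r : ℝ), 0 < r → 0 < μ (Metric.ball ζ r))
    (hfin : ∀ (ζ : Z) (r : ℝ), μ (Metric.ball ζ r) < ∞)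
    (ξ : X → Z) (lvl : X → ℤ)
    (hsep : ∀ x y : X, x ≠ y → lvl x = lvl y → (2:ℝ) ^ (-lvl x - 1) ≤ dist (ξ x) (ξ y))
    (p : ℝ≥0∞) (hp0 : p ≠ 0)
    (Ψ : X → X) (σ : ℤ) (hσ : 0 ≤ σ)
    (hΨ1 : ∀ x, (vBall ξ lvl (Ψ x) ∩ vBall ξ lvl x).Nonempty)
    (hΨ2 : ∀ x, |lvl (Ψ x) - lvl x| ≤ σ) :
    ∃ M : ℝ≥0∞, M ≠ ∞ ∧ ∀ (u : X → ℂ) (k : ℤ),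
      sumPartG p (fun x : {x : X // lvl x = k} => μ (vBall ξ lvl x.1))
          (fun x => (‖u (Ψ x.1)‖₊ : ℝ≥0∞))
        ≤ M * ∑ i ∈ Finset.Icc (-σ) σ,
            sumPartG p (fun x : {x : X // lvl x = k + i} => μ (vBall ξ lvl x.1))
              (fun x => (‖u x.1‖₊ : ℝ≥0∞)) := by
  classical
  by_cases hp' : p = ∞
  · subst hp'
    refine ⟨1, one_ne_top, fun u k => ?_⟩
    simp only [sumPartG, if_pos rfl, one_mul]
    refine iSup_le fun x => ?_
    have hx2 := abs_le.mp (hΨ2 x.1)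
    have hxl : lvl x.1 = k := x.2
    have hi : lvl (Ψ x.1) - k ∈ Finset.Icc (-σ) σ := by rw [Finset.mem_Icc]; omega
    refine le_trans ?_ (Finset.single_le_sum
      (f := fun i => ⨆ y : {y : X // lvl y = k + i}, ((‖u y.1‖₊ : ℝ≥0∞)))
      (fun _ _ => zero_le) hi)
    exact le_iSup_of_le ⟨Ψ x.1, by omega⟩ le_rfl
  · have hr : 0 < p.toReal := ENNReal.toReal_pos hp0 hp'
    set r := p.toReal with hrdef
    set F := Finset.Icc (-σ) σ with hFdef
    set K := ENNReal.ofReal (C * ((2:ℝ) ^ (σ+2)) ^ Q) with hKdef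
    set N : ℕ := ⌈C * ((2:ℝ) ^ (σ+5)) ^ Q⌉₊ with hNdef
    have hKfin : K ≠ ∞ := ENNReal.ofReal_ne_top
    refine ⟨(K * N * F.card) ^ (1/r), ENNReal.rpow_ne_top_of_nonneg (by positivity)
      (ENNReal.mul_ne_top (ENNReal.mul_ne_top hKfin (ENNReal.natCast_ne_top _))
        (ENNReal.natCast_ne_top _)), fun u k => ?_⟩
    simp only [sumPartG, if_neg hp']
    set h : X → ℝ≥0∞ := fun y => μ (vBall ξ lvl y) * (‖u y‖₊ : ℝ≥0∞) ^ r with hhdef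
    set Φ : {x : X // lvl x = k} → X := fun x => Ψ x.1 with hΦdef
    -- bound on fibers of Φ
    have hTbound : ∀ (y : X) (T : Finset {x : X // lvl x = k}),
        (∀ a ∈ T, Φ a = y) → T.card ≤ N := by
      intro y T hT
      rcases Finset.eq_empty_or_nonempty T with rfl | ⟨a0, ha0⟩
      · simp
      · have hy : |lvl y - k| ≤ σ := by
          have h1 := hΨ2 a0.1
          have hΨy : Ψ a0.1 = y := hT a0 ha0
          rw [hΨy, a0.2] at h1
          exact h1
        set T' := T.image Subtype.val with hT'def
        have hcard' : T'.card = T.card :=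
          Finset.card_image_of_injective _ Subtype.val_injective
        have h1 : ∀ x ∈ T', lvl x = k := by
          intro x hx; obtain ⟨a, _, rfl⟩ := Finset.mem_image.mp hx; exact a.2
        have h2 : ∀ x ∈ T', dist (ξ x) (ξ y) < (2:ℝ) ^ (σ+1-k) := by
          intro x hx; obtain ⟨a, ha, rfl⟩ := Finset.mem_image.mp hx
          have hΨa : Ψ a.1 = y := hT a ha
          obtain ⟨z, hz1, hz2⟩ := hΨ1 a.1
          rw [hΨa] at hz1
          rw [vBall, mem_ball] at hz1 hz2
          have hal : lvl a.1 = k := a.2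
          rw [hal] at hz2
          have hd : dist (ξ a.1) (ξ y) < (2:ℝ) ^ (-k) + (2:ℝ) ^ (-(lvl y)) := by
            calc dist (ξ a.1) (ξ y) ≤ dist z (ξ a.1) + dist z (ξ y) :=
                  dist_triangle_left _ _ _
              _ < _ := by linarith
          have hb1 : (2:ℝ) ^ (-k) ≤ (2:ℝ) ^ (σ - k) := aux_two_zpow_le (by omega)
          have hb2 : (2:ℝ) ^ (-(lvl y)) ≤ (2:ℝ) ^ (σ - k) := by
            apply aux_two_zpow_le; have := abs_le.mp hy; omega
          have hb3 : (2:ℝ) ^ (σ - k) + (2:ℝ) ^ (σ-k) = (2:ℝ) ^ (σ+1-k) := by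
            rw [show σ+1-k = (σ-k)+1 by ring, aux_two_zpow_add]
          linarith
        have hcount := aux_count μ C Q hdoub hpos hfin ξ lvl hsep σ hσ k (ξ y) T' h1 h2
        have hle : (T'.card : ℝ≥0∞) ≤ (N : ℝ≥0∞) := by
          refine hcount.trans ?_
          rw [← ENNReal.ofReal_natCast]
          exact ENNReal.ofReal_le_ofReal (Nat.le_ceil _)
        have : T'.card ≤ N := by exact_mod_cast hle
        omega
    have hfib : ∀ y : X, (Φ ⁻¹' {y}).Finite := by
      intro y
      by_contra hinf
      obtain ⟨T, hTs, hTc⟩ := Set.Infinite.exists_subset_card_eq hinf (N+1)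
      have := hTbound y T (fun a ha => hTs ha)
      omega
    have hcard : ∀ y, (hfib y).toFinset.card ≤ N := by
      intro y
      refine hTbound y _ fun a ha => ?_
      exact (Set.Finite.mem_toFinset (hfib y)).mp ha
    have hrange : ∀ a : {x : X // lvl x = k}, ∃ i ∈ F, Φ a ∈ {y : X | lvl y = k + i} := by
      intro a
      have h1 := abs_le.mp (hΨ2 a.1)
      have h2 : lvl a.1 = k := a.2
      exact ⟨lvl (Ψ a.1) - k, by rw [hFdef, Finset.mem_Icc]; omega, by simp [hΦdef]⟩
    have main := aux_tsum_comp_le Φ h N F (fun i => {y : X | lvl y = k + i}) hfib hcard hrange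
    set A := ∑ i ∈ F, (∑' x : {x : X // lvl x = k + i},
      μ (vBall ξ lvl x.1) * (‖u x.1‖₊ : ℝ≥0∞) ^ r) ^ (1/r) with hAdef
    have hSA : ∀ i ∈ F, (∑' b : {y : X | lvl y = k + i}, h b.1) ≤ A ^ r := by
      intro i hi
      have heq : (∑' b : {y : X | lvl y = k + i}, h b.1)
          = ((∑' x : {x : X // lvl x = k + i},
              μ (vBall ξ lvl x.1) * (‖u x.1‖₊ : ℝ≥0∞) ^ r) ^ (1/r)) ^ r := by
        rw [← ENNReal.rpow_mul, one_div_mul_cancel hr.ne', ENNReal.rpow_one]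
        rfl
      rw [heq]
      refine ENNReal.rpow_le_rpow ?_ hr.le
      exact Finset.single_le_sum (f := fun i => (∑' x : {x : X // lvl x = k + i},
        μ (vBall ξ lvl x.1) * (‖u x.1‖₊ : ℝ≥0∞) ^ r) ^ (1/r)) (fun _ _ => zero_le) hi
    have chain : (∑' x : {x : X // lvl x = k},
        μ (vBall ξ lvl x.1) * (‖u (Ψ x.1)‖₊ : ℝ≥0∞) ^ r) ≤ (K * N * F.card) * A ^ r := by
      calc (∑' x : {x : X // lvl x = k}, μ (vBall ξ lvl x.1) * (‖u (Ψ x.1)‖₊ : ℝ≥0∞) ^ r)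
          ≤ ∑' x : {x : X // lvl x = k}, K * h (Φ x) := by
            refine ENNReal.tsum_le_tsum fun x => ?_
            have hcomp := aux_meascomp μ C Q hdoub ξ lvl σ hσ x.1 (Ψ x.1)
              (hΨ1 x.1) (hΨ2 x.1)
            calc μ (vBall ξ lvl x.1) * (‖u (Ψ x.1)‖₊ : ℝ≥0∞) ^ r
                ≤ (K * μ (vBall ξ lvl (Ψ x.1))) * (‖u (Ψ x.1)‖₊ : ℝ≥0∞) ^ r :=
                  mul_le_mul_left hcomp _
              _ = K * h (Φ x) := by rw [mul_assoc]
        _ = K * ∑' x : {x : X // lvl x = k}, h (Φ x) := ENNReal.tsum_mul_left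
        _ ≤ K * (N * ∑ i ∈ F, ∑' b : {y : X | lvl y = k + i}, h b.1) :=
            mul_le_mul_right main _
        _ ≤ K * (N * ∑ _i ∈ F, A ^ r) := by
            refine mul_le_mul_right (mul_le_mul_right (Finset.sum_le_sum hSA) _) _
        _ = (K * N * F.card) * A ^ r := by
            rw [Finset.sum_const, nsmul_eq_mul]; ring
    calc (∑' x : {x : X // lvl x = k}, μ (vBall ξ lvl x.1) * (‖u (Ψ x.1)‖₊ : ℝ≥0∞) ^ r) ^ (1/r)
        ≤ ((K * N * F.card) * A ^ r) ^ (1/r) := ENNReal.rpow_le_rpow chain (by positivity)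
      _ = (K * N * F.card) ^ (1/r) * A := by
          rw [ENNReal.mul_rpow_of_nonneg _ _ (by positivity : (0:ℝ) ≤ 1/r),
            ← ENNReal.rpow_mul, mul_one_div, div_self hr.ne', ENNReal.rpow_one]

/-- composition with a bounded-level-displacement map `Ψ` whose ball meets
the original one is bounded on `I^s_{p,q}(X)`. -/
theorem statement10 {Z : Type*} [MetricSpace Z] [MeasurableSpace Z] [BorelSpace Z]
    (μ : Measure Z) (C Q : ℝ) (hC : 1 ≤ C) (hQ : 0 < Q)
    (hdoub : ∀ (ζ : Z) (r lam : ℝ), 0 < r → 1 ≤ lam →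
      μ (Metric.ball ζ (lam * r)) ≤ ENNReal.ofReal (C * lam ^ Q) * μ (Metric.ball ζ r))
    (hpos : ∀ (ζ : Z) (r : ℝ), 0 < r → 0 < μ (Metric.ball ζ r))
    (hfin : ∀ (ζ : Z) (r : ℝ), μ (Metric.ball ζ r) < ∞)
    {X : Type*} (ξ : X → Z) (lvl : X → ℤ)
    (hsep : ∀ x y : X, x ≠ y → lvl x = lvl y → (2:ℝ) ^ (-lvl x - 1) ≤ dist (ξ x) (ξ y))
    (hmax : ∀ (n : ℤ) (z : Z), ∃ x : X, lvl x = n ∧ dist z (ξ x) < (2:ℝ) ^ (-n - 1))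
    (s : ℝ) (hs : 0 < s) (p q : ℝ≥0∞)
    (hp : ENNReal.ofReal (Q / (Q + s)) < p) (hq : 0 < q)
    (Ψ : X → X) (σ : ℤ) (hσ : 0 ≤ σ)
    (hΨ1 : ∀ x, (vBall ξ lvl (Ψ x) ∩ vBall ξ lvl x).Nonempty)
    (hΨ2 : ∀ x, |lvl (Ψ x) - lvl x| ≤ σ) :
    ∃ Cb : ℝ≥0∞, Cb ≠ ∞ ∧ ∀ u : X → ℂ,
      seqNorm μ ξ lvl s p q (fun x => (‖u (Ψ x)‖₊ : ℝ≥0∞)) ≤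
        Cb * seqNorm μ ξ lvl s p q (fun x => (‖u x‖₊ : ℝ≥0∞)) := by
  classical
  have hp0 : p ≠ 0 := by
    have h1 : 0 < ENNReal.ofReal (Q / (Q + s)) :=
      ENNReal.ofReal_pos.mpr (div_pos hQ (by linarith))
    exact (h1.trans hp).ne'
  obtain ⟨M, hM, hMA⟩ := aux_claimA μ C Q hdoub hpos hfin ξ lvl hsep p hp0 Ψ σ hσ hΨ1 hΨ2
  have h2t : (2:ℝ≥0∞) ≠ ∞ := by norm_num
  have hσs : ((2:ℝ≥0∞) ^ ((σ:ℝ) * s)) ≠ ∞ :=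
    ENNReal.rpow_ne_top_of_nonneg (mul_nonneg (by exact_mod_cast hσ) hs.le) h2t
  obtain ⟨Cb, hCb, hB⟩ := aux_claimB q hq (Finset.Icc (-σ) σ)
    (M * (2:ℝ≥0∞) ^ ((σ:ℝ) * s)) (ENNReal.mul_ne_top hM hσs)
  refine ⟨Cb, hCb, fun u => ?_⟩
  have hcw : ∀ k : ℤ,
      (2:ℝ≥0∞) ^ ((k:ℝ) * s) * sumPartG p
          (fun x : {x : X // lvl x = k} => μ (vBall ξ lvl x.1))
          (fun x => (‖u (Ψ x.1)‖₊ : ℝ≥0∞))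
      ≤ (M * (2:ℝ≥0∞) ^ ((σ:ℝ) * s)) * ∑ i ∈ Finset.Icc (-σ) σ,
          (2:ℝ≥0∞) ^ (((k+i : ℤ):ℝ) * s) * sumPartG p
            (fun x : {x : X // lvl x = k+i} => μ (vBall ξ lvl x.1))
            (fun x => (‖u x.1‖₊ : ℝ≥0∞)) := by
    intro k
    calc (2:ℝ≥0∞) ^ ((k:ℝ) * s) * sumPartG p
          (fun x : {x : X // lvl x = k} => μ (vBall ξ lvl x.1))
          (fun x => (‖u (Ψ x.1)‖₊ : ℝ≥0∞))
        ≤ (2:ℝ≥0∞) ^ ((k:ℝ) * s) * (M * ∑ i ∈ Finset.Icc (-σ) σ,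
            sumPartG p (fun x : {x : X // lvl x = k + i} => μ (vBall ξ lvl x.1))
              (fun x => (‖u x.1‖₊ : ℝ≥0∞))) := mul_le_mul_right (hMA u k) _
      _ = ∑ i ∈ Finset.Icc (-σ) σ, (2:ℝ≥0∞) ^ ((k:ℝ) * s) * (M *
            sumPartG p (fun x : {x : X // lvl x = k + i} => μ (vBall ξ lvl x.1))
              (fun x => (‖u x.1‖₊ : ℝ≥0∞))) := by
          rw [Finset.mul_sum, Finset.mul_sum]
      _ ≤ ∑ i ∈ Finset.Icc (-σ) σ, (M * (2:ℝ≥0∞) ^ ((σ:ℝ) * s)) *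
            ((2:ℝ≥0∞) ^ (((k+i : ℤ):ℝ) * s) *
              sumPartG p (fun x : {x : X // lvl x = k+i} => μ (vBall ξ lvl x.1))
                (fun x => (‖u x.1‖₊ : ℝ≥0∞))) := by
          refine Finset.sum_le_sum fun i hi => ?_
          have hiF : -σ ≤ i := (Finset.mem_Icc.mp hi).1
          have hexp : (2:ℝ≥0∞) ^ ((k:ℝ) * s) ≤
              (2:ℝ≥0∞) ^ ((σ:ℝ) * s) * (2:ℝ≥0∞) ^ (((k+i : ℤ):ℝ) * s) := by
            rw [← ENNReal.rpow_add _ _ (by norm_num) h2t]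
            apply ENNReal.rpow_le_rpow_of_exponent_le one_le_two
            have hσi : (0:ℝ) ≤ ((σ:ℝ) + (i:ℝ)) := by
              exact_mod_cast (by omega : (0:ℤ) ≤ σ + i)
            push_cast
            nlinarith [mul_nonneg hσi hs.le]
          calc (2:ℝ≥0∞) ^ ((k:ℝ) * s) * (M * sumPartG p
                (fun x : {x : X // lvl x = k + i} => μ (vBall ξ lvl x.1))
                (fun x => (‖u x.1‖₊ : ℝ≥0∞)))
              ≤ ((2:ℝ≥0∞) ^ ((σ:ℝ) * s) * (2:ℝ≥0∞) ^ (((k+i : ℤ):ℝ) * s)) * (M * sumPartG p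
                (fun x : {x : X // lvl x = k + i} => μ (vBall ξ lvl x.1))
                (fun x => (‖u x.1‖₊ : ℝ≥0∞))) := mul_le_mul_left hexp _
            _ = _ := by ring
      _ = (M * (2:ℝ≥0∞) ^ ((σ:ℝ) * s)) * ∑ i ∈ Finset.Icc (-σ) σ,
            (2:ℝ≥0∞) ^ (((k+i : ℤ):ℝ) * s) * sumPartG p
              (fun x : {x : X // lvl x = k+i} => μ (vBall ξ lvl x.1))
              (fun x => (‖u x.1‖₊ : ℝ≥0∞)) := by
          rw [Finset.mul_sum]
  exact hB
    (fun j => (2:ℝ≥0∞) ^ ((j:ℝ) * s) * sumPartG p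
      (fun x : {x : X // lvl x = j} => μ (vBall ξ lvl x.1)) (fun x => (‖u x.1‖₊ : ℝ≥0∞)))
    (fun k => (2:ℝ≥0∞) ^ ((k:ℝ) * s) * sumPartG p
      (fun x : {x : X // lvl x = k} => μ (vBall ξ lvl x.1))
      (fun x => (‖u (Ψ x.1)‖₊ : ℝ≥0∞)))
    hcw
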